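/- Let φ₀ ∈ S_n and 0 ≤ A ≤ n/2. The number of permutations φ ∈ S_n that share at least (n/2 − A) two-cycles with φ₀ is at most n^{2A}. -/

import Mathlib

open Finset

namespace Stmt14Aux

variable {n : ℕ}

/-- The set of points where `φ` differs from `φ₀`. -/
def Dset (φ₀ φ : Equiv.Perm (Fin n)) : Finset (Fin n) :=
  Finset.univ.filter (fun x => φ x ≠ φ₀ x)

lemma mem_Dset {φ₀ φ : Equiv.Perm (Fin n)} {x : Fin n} :
    x ∈ Dset φ₀ φ ↔ φ x ≠ φ₀ x := by simp [Dset]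

/-- Two permutations cannot differ in exactly one point. -/
lemma Dset_card_ne_one (φ₀ φ : Equiv.Perm (Fin n)) : (Dset φ₀ φ).card ≠ 1 := by
  intro h
  obtain ⟨d, hd⟩ := Finset.card_eq_one.mp h
  have hmem : ∀ x : Fin n, φ x ≠ φ₀ x ↔ x = d := by
    intro x
    rw [← mem_Dset (φ₀ := φ₀), hd, Finset.mem_singleton]
  have hd' : φ d ≠ φ₀ d := (hmem d).mpr rfl
  have hφx : φ (φ.symm (φ₀ d)) = φ₀ d := φ.apply_symm_apply _
  have hxd : φ.symm (φ₀ d) ≠ d := fun h => hd' (by rw [h] at hφx; exact hφx)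
  have h1 : φ (φ.symm (φ₀ d)) = φ₀ (φ.symm (φ₀ d)) :=
    not_ne_iff.mp (fun hne => hxd ((hmem _).mp hne))
  exact hxd (φ₀.injective (by rw [← h1, hφx]))

/-- The images of the difference set under `φ` and `φ₀` coincide. -/
lemma image_Dset (φ₀ φ : Equiv.Perm (Fin n)) :
    (Dset φ₀ φ).image φ = (Dset φ₀ φ).image φ₀ := by
  apply Finset.eq_of_subset_of_card_le
  · intro y hy
    obtain ⟨x, hx, rfl⟩ := Finset.mem_image.mp hy
    by_cases hw : φ₀.symm (φ x) ∈ Dset φ₀ φ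
    · exact Finset.mem_image.mpr ⟨_, hw, φ₀.apply_symm_apply _⟩
    · exfalso
      have h1 : φ (φ₀.symm (φ x)) = φ₀ (φ₀.symm (φ x)) :=
        not_ne_iff.mp (fun hne => hw (mem_Dset.mpr hne))
      rw [φ₀.apply_symm_apply] at h1
      have := φ.injective h1
      rw [this] at hw
      exact hw hx
  · rw [Finset.card_image_of_injective _ φ₀.injective,
      Finset.card_image_of_injective _ φ.injective]

lemma eq_of_Dset_empty {φ₀ φ : Equiv.Perm (Fin n)} (h : Dset φ₀ φ = ∅) : φ = φ₀ := by
  apply Equiv.ext; intro x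
  by_contra hne
  exact Finset.notMem_empty x (h ▸ mem_Dset.mpr hne)

/-- The sorted list of the difference set. -/
def Dlist (φ₀ φ : Equiv.Perm (Fin n)) : List (Fin n) := (Dset φ₀ φ).sort (· ≤ ·)

lemma mem_Dlist {φ₀ φ : Equiv.Perm (Fin n)} {x : Fin n} :
    x ∈ Dlist φ₀ φ ↔ x ∈ Dset φ₀ φ := Finset.mem_sort _

lemma length_Dlist (φ₀ φ : Equiv.Perm (Fin n)) :
    (Dlist φ₀ φ).length = (Dset φ₀ φ).card := Finset.length_sort _

lemma Dlist_eq_nil {φ₀ φ : Equiv.Perm (Fin n)} (h : Dset φ₀ φ = ∅) :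
    Dlist φ₀ φ = [] := by
  rw [← List.length_eq_zero_iff, length_Dlist, h, Finset.card_empty]

/-- Encoding of a permutation as a `k`-tuple: list the values of `φ` on the points where
it differs from `φ₀`, padded with the value at the first such point. -/
def Enc (φ₀ : Equiv.Perm (Fin n)) (k : ℕ) (hn : 0 < n) (φ : Equiv.Perm (Fin n)) :
    Fin k → Fin n :=
  fun i => φ ((Dlist φ₀ φ).getD i ((Dlist φ₀ φ).headD ⟨0, hn⟩))

lemma enc_getElem (φ₀ : Equiv.Perm (Fin n)) (k : ℕ) (hn : 0 < n) (φ : Equiv.Perm (Fin n))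
    {j : ℕ} (hj : j < (Dlist φ₀ φ).length) (hjk : j < k) :
    Enc φ₀ k hn φ ⟨j, hjk⟩ = φ ((Dlist φ₀ φ)[j]) := by
  unfold Enc
  rw [List.getD_eq_getElem _ _ hj]

lemma enc_mem (φ₀ : Equiv.Perm (Fin n)) (k : ℕ) (hn : 0 < n) (φ : Equiv.Perm (Fin n))
    (hne : Dset φ₀ φ ≠ ∅) (i : Fin k) : Enc φ₀ k hn φ i ∈ (Dset φ₀ φ).image φ := by
  apply Finset.mem_image_of_mem
  rw [← mem_Dlist]
  by_cases h : (i : ℕ) < (Dlist φ₀ φ).length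
  · rw [List.getD_eq_getElem _ _ h]
    exact List.getElem_mem _
  · rw [List.getD_eq_default _ _ (le_of_not_gt h)]
    cases hl : Dlist φ₀ φ with
    | nil => exact absurd (by rw [← Finset.card_eq_zero,
        ← length_Dlist (φ₀ := φ₀) (φ := φ), hl]; rfl) hne
    | cons a t => simp

lemma enc_surj (φ₀ : Equiv.Perm (Fin n)) (k : ℕ) (hn : 0 < n) (φ : Equiv.Perm (Fin n))
    (hcard : (Dset φ₀ φ).card ≤ k) {x : Fin n} (hx : x ∈ Dset φ₀ φ) :
    ∃ i : Fin k, Enc φ₀ k hn φ i = φ x := by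
  rw [← mem_Dlist] at hx
  obtain ⟨j, hj, hget⟩ := List.mem_iff_getElem.mp hx
  have hjk : j < k := lt_of_lt_of_le (by rwa [length_Dlist] at hj) hcard
  exact ⟨⟨j, hjk⟩, by rw [enc_getElem φ₀ k hn φ hj hjk, hget]⟩

lemma image_enc (φ₀ : Equiv.Perm (Fin n)) (k : ℕ) (hn : 0 < n) (φ : Equiv.Perm (Fin n))
    (hcard : (Dset φ₀ φ).card ≤ k) (hne : Dset φ₀ φ ≠ ∅) :
    Finset.image (Enc φ₀ k hn φ) Finset.univ = (Dset φ₀ φ).image φ₀ := by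
  rw [← image_Dset]
  apply Finset.Subset.antisymm
  · intro y hy
    obtain ⟨i, _, rfl⟩ := Finset.mem_image.mp hy
    exact enc_mem φ₀ k hn φ hne i
  · intro y hy
    obtain ⟨x, hx, rfl⟩ := Finset.mem_image.mp hy
    obtain ⟨i, hi⟩ := enc_surj φ₀ k hn φ hcard hx
    exact Finset.mem_image.mpr ⟨i, Finset.mem_univ _, hi⟩

lemma no_mixed (φ₀ : Equiv.Perm (Fin n)) (k : ℕ) (hn : 0 < n) (φ φ' : Equiv.Perm (Fin n))
    (h1 : Dset φ₀ φ = ∅) (h2 : Dset φ₀ φ' ≠ ∅) (hc' : (Dset φ₀ φ').card ≤ k)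
    (henc : Enc φ₀ k hn φ = Enc φ₀ k hn φ') : False := by
  have hconst : ∀ i : Fin k, Enc φ₀ k hn φ i = φ₀ ⟨0, hn⟩ := by
    intro i
    unfold Enc
    rw [Dlist_eq_nil h1]
    simp [eq_of_Dset_empty h1]
  have hsub : Dset φ₀ φ' ⊆ {φ'.symm (φ₀ ⟨0, hn⟩)} := by
    intro x hx
    obtain ⟨i, hi⟩ := enc_surj φ₀ k hn φ' hc' hx
    rw [← henc, hconst i] at hi
    rw [Finset.mem_singleton, ← φ'.symm_apply_apply x, ← hi]
  have hle : (Dset φ₀ φ').card ≤ 1 := le_trans (Finset.card_le_card hsub) (by simp)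
  have hpos : 0 < (Dset φ₀ φ').card := Finset.card_pos.mpr (Finset.nonempty_of_ne_empty h2)
  exact Dset_card_ne_one φ₀ φ' (le_antisymm hle hpos)

/-- Key counting bound: at most `n ^ k` permutations differ from `φ₀` in at most
`k` points. -/
lemma count_le (φ₀ : Equiv.Perm (Fin n)) (k : ℕ) (hn : 0 < n) :
    (Finset.univ.filter (fun φ : Equiv.Perm (Fin n) => (Dset φ₀ φ).card ≤ k)).card
      ≤ n ^ k := by
  classical
  have hcard_univ : (Finset.univ : Finset (Fin k → Fin n)).card = n ^ k := by
    simp [Fintype.card_fun]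
  rw [← hcard_univ]
  apply Finset.card_le_card_of_injOn (Enc φ₀ k hn) (fun φ _ => Finset.mem_univ _)
  intro φ hφ φ' hφ' henc
  simp only [Finset.mem_coe, Finset.mem_filter] at hφ hφ'
  by_cases h1 : Dset φ₀ φ = ∅ <;> by_cases h2 : Dset φ₀ φ' = ∅
  · rw [eq_of_Dset_empty h1, eq_of_Dset_empty h2]
  · exact absurd (no_mixed φ₀ k hn φ φ' h1 h2 hφ'.2 henc) not_false
  · exact absurd (no_mixed φ₀ k hn φ' φ h2 h1 hφ.2 henc.symm) not_false
  · have him : (Dset φ₀ φ).image φ₀ = (Dset φ₀ φ').image φ₀ := by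
      rw [← image_enc φ₀ k hn φ hφ.2 h1, ← image_enc φ₀ k hn φ' hφ'.2 h2, henc]
    have hD : Dset φ₀ φ = Dset φ₀ φ' := Finset.image_injective φ₀.injective him
    have hL : Dlist φ₀ φ = Dlist φ₀ φ' := by unfold Dlist; rw [hD]
    apply Equiv.ext; intro x
    by_cases hx : x ∈ Dset φ₀ φ
    · rw [← mem_Dlist] at hx
      obtain ⟨j, hj, hget⟩ := List.mem_iff_getElem.mp hx
      have hjk : j < k := lt_of_lt_of_le (by rwa [length_Dlist] at hj) hφ.2
      have e1 := enc_getElem φ₀ k hn φ hj hjk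
      have e2 := enc_getElem φ₀ k hn φ' (by rwa [← hL]) hjk
      rw [henc, hget] at e1
      simp only [← hL] at e2
      rw [hget] at e2
      rw [← e1, e2]
    · have ha : φ x = φ₀ x := not_ne_iff.mp (fun hne => hx (mem_Dset.mpr hne))
      have hx' : x ∉ Dset φ₀ φ' := hD ▸ hx
      have hb : φ' x = φ₀ x := not_ne_iff.mp (fun hne => hx' (mem_Dset.mpr hne))
      rw [ha, hb]

/-- The number of shared ordered 2-cycle pairs is at most the number of points where
`φ` and `φ₀` agree (project a pair to its first coordinate). -/
lemma S_le_agree (φ₀ φ : Equiv.Perm (Fin n)) :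
    ((Finset.univ ×ˢ Finset.univ : Finset (Fin n × Fin n)).filter
        (fun p => p.1 ≠ p.2 ∧ φ₀ p.1 = p.2 ∧ φ₀ p.2 = p.1 ∧ φ p.1 = p.2 ∧ φ p.2 = p.1)).card
      ≤ (Finset.univ.filter (fun x => φ x = φ₀ x)).card := by
  apply Finset.card_le_card_of_injOn Prod.fst
  · intro p hp
    rw [Finset.mem_coe, Finset.mem_filter] at hp
    rw [Finset.mem_coe, Finset.mem_filter]
    exact ⟨Finset.mem_univ _, by rw [hp.2.2.2.2.1, hp.2.2.1]⟩
  · intro p hp q hq h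
    simp only [Finset.mem_coe, Finset.mem_filter] at hp hq
    have : p.2 = q.2 := by rw [← hp.2.2.1, ← hq.2.2.1, h]
    exact Prod.ext h this

lemma agree_add_Dset (φ₀ φ : Equiv.Perm (Fin n)) :
    (Finset.univ.filter (fun x => φ x = φ₀ x)).card + (Dset φ₀ φ).card = n := by
  rw [Dset]
  have := Finset.card_filter_add_card_filter_not
    (s := (Finset.univ : Finset (Fin n))) (p := fun x => φ x = φ₀ x)
  simpa using this

end Stmt14Aux

/-- for 0 ≤ A ≤ n/2, the number of permutations sharing at least n/2 − A
two-cycles with a fixed permutation φ₀ is at most n^{2A}. (The number of shared 2-cycles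
is half the number of ordered pairs (x,y), x ≠ y, forming a 2-cycle of both.) -/
theorem stmt_14 (n A : ℕ) (hA : 2 * A ≤ n) (φ₀ : Equiv.Perm (Fin n)) :
    (((Finset.univ : Finset (Equiv.Perm (Fin n))).filter (fun φ =>
      n - 2 * A ≤ ((Finset.univ ×ˢ Finset.univ : Finset (Fin n × Fin n)).filter
        (fun p => p.1 ≠ p.2 ∧ φ₀ p.1 = p.2 ∧ φ₀ p.2 = p.1 ∧ φ p.1 = p.2 ∧ φ p.2 = p.1)).card)).card)
      ≤ n ^ (2 * A) := by
  classical
  by_cases hn : 0 < n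
  · refine le_trans (Finset.card_le_card ?_) (Stmt14Aux.count_le φ₀ (2 * A) hn)
    intro φ hφ
    rw [Finset.mem_filter] at hφ ⊢
    refine ⟨Finset.mem_univ _, ?_⟩
    have h1 := hφ.2
    have h2 := Stmt14Aux.S_le_agree φ₀ φ
    have h3 := Stmt14Aux.agree_add_Dset φ₀ φ
    omega
  · have hn0 : n = 0 := by omega
    subst hn0
    have hA0 : A = 0 := by omega
    subst hA0
    refine le_trans (Finset.card_filter_le _ _) ?_
    simp
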